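/- Let X be the topological space on {m_i : i ∈ ℕ ∪ {∞}} ∪ {p_j : j ≥ 1} whose closed sets are the specialization-stable subsets that are finite or contain m_∞. Then a subset V ⊆ X is quasi-compact if and only if m_∞ ∈ V or V is finite. -/
import Mathlib


open Topology

/-- The points of the space: `m i` for `i ∈ ℕ ∪ {∞}` and `p j` for `j ≥ 1`. -/
inductive Pt : Type where
  | m : ℕ∞ → Pt
  | p : ℕ+ → Pt

/-- Closed sets: specialization-stable subsets that are finite or contain `m ∞`. -/
def ClosedCond (Z : Set Pt) : Prop :=
  (∀ j : ℕ+, Pt.p j ∈ Z →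
      Pt.m (((j : ℕ) - 1 : ℕ) : ℕ∞) ∈ Z ∧ Pt.m ((j : ℕ) : ℕ∞) ∈ Z) ∧
  (Z.Finite ∨ Pt.m ⊤ ∈ Z)

/-- The (finitely many) points whose closure contains `x`. -/
def bad : Pt → Set Pt
  | Pt.m i => {Pt.m i} ∪ {y | ∃ j : ℕ+, y = Pt.p j ∧
      (((j : ℕ) : ℕ∞) = i ∨ (((j : ℕ) - 1 : ℕ) : ℕ∞) = i)}
  | Pt.p j => {Pt.p j}

lemma mem_bad_self (x : Pt) : x ∈ bad x := by
  cases x with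
  | m i => exact Or.inl rfl
  | p j => exact rfl

lemma bad_finite (x : Pt) : (bad x).Finite := by
  cases x with
  | p j => exact Set.finite_singleton _
  | m i =>
    refine (Set.finite_singleton (Pt.m i)).union ?_
    have hsub : {y : Pt | ∃ j : ℕ+, y = Pt.p j ∧
        (((j : ℕ) : ℕ∞) = i ∨ (((j : ℕ) - 1 : ℕ) : ℕ∞) = i)} ⊆
        {y : Pt | ∃ j : ℕ+, y = Pt.p j ∧ ((j : ℕ) : ℕ∞) = i} ∪
        {y : Pt | ∃ j : ℕ+, y = Pt.p j ∧ (((j : ℕ) - 1 : ℕ) : ℕ∞) = i} := by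
      rintro y ⟨j, rfl, h | h⟩
      · exact Or.inl ⟨j, rfl, h⟩
      · exact Or.inr ⟨j, rfl, h⟩
    refine Set.Finite.subset (Set.Finite.union ?_ ?_) hsub
    · apply Set.Subsingleton.finite
      rintro a ⟨j1, rfl, h1⟩ b ⟨j2, rfl, h2⟩
      have : (j1 : ℕ) = (j2 : ℕ) := by exact_mod_cast h1.trans h2.symm
      have : j1 = j2 := PNat.coe_injective this
      rw [this]
    · apply Set.Subsingleton.finite
      rintro a ⟨j1, rfl, h1⟩ b ⟨j2, rfl, h2⟩
      have h3 : ((j1 : ℕ) - 1 : ℕ) = ((j2 : ℕ) - 1 : ℕ) := by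
        exact_mod_cast h1.trans h2.symm
      have h4 : (j1 : ℕ) = (j2 : ℕ) := by
        have := j1.pos; have := j2.pos; omega
      have : j1 = j2 := PNat.coe_injective h4
      rw [this]

/-- A subset `V` is quasi-compact if and only if `m ∞ ∈ V` or `V` is finite. -/
theorem stmt_7 [t : TopologicalSpace Pt]
    (ht : ∀ Z : Set Pt, IsClosed Z ↔ ClosedCond Z) :
    ∀ V : Set Pt, IsCompact V ↔ (Pt.m ⊤ ∈ V ∨ V.Finite) := by
  intro V
  constructor
  · intro hc
    by_contra h
    push_neg at h
    obtain ⟨hm, hinf⟩ := h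
    -- closed set avoiding x but containing almost all of V
    set Z : Pt → Set Pt := fun x =>
      ((V \ bad x) ∪ {Pt.m ⊤}) ∪
        {y | ∃ j : ℕ+, Pt.p j ∈ V \ bad x ∧
          (y = Pt.m ((j : ℕ) : ℕ∞) ∨ y = Pt.m (((j : ℕ) - 1 : ℕ) : ℕ∞))} with hZdef
    have hZclosed : ∀ x, IsClosed (Z x) := by
      intro x
      rw [ht]
      constructor
      · intro j hj
        have hj' : Pt.p j ∈ V \ bad x := by
          rcases hj with (h1 | h1) | h1
          · exact h1
          · exact absurd h1 (by simp)
          · obtain ⟨j', _, h2 | h2⟩ := h1 <;> exact absurd h2 (by simp)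
        exact ⟨Or.inr ⟨j, hj', Or.inr rfl⟩, Or.inr ⟨j, hj', Or.inl rfl⟩⟩
      · exact Or.inr (Or.inl (Or.inr rfl))
    have hnot : ∀ x ∈ V, x ∉ Z x := by
      intro x hx hxZ
      rcases hxZ with (h1 | h1) | h1
      · exact h1.2 (mem_bad_self x)
      · simp only [Set.mem_singleton_iff] at h1
        rw [h1] at hx; exact hm hx
      · obtain ⟨j, hj, h2 | h2⟩ := h1
        · exact hj.2 (by rw [h2]; exact Or.inr ⟨j, rfl, Or.inl rfl⟩)
        · exact hj.2 (by rw [h2]; exact Or.inr ⟨j, rfl, Or.inr rfl⟩)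
    have hcov : V ⊆ ⋃ x : Pt, (Z x)ᶜ := by
      intro y hy
      exact Set.mem_iUnion.2 ⟨y, hnot y hy⟩
    obtain ⟨s, hs⟩ := hc.elim_finite_subcover (fun x => (Z x)ᶜ)
      (fun x => (hZclosed x).isOpen_compl) hcov
    have hVsub : V ⊆ ⋃ x ∈ s, bad x := by
      intro y hy
      obtain ⟨x, hxs, hyx⟩ := Set.mem_iUnion₂.1 (hs hy)
      refine Set.mem_iUnion₂.2 ⟨x, hxs, ?_⟩
      by_contra hb
      exact hyx (Or.inl (Or.inl ⟨hy, hb⟩))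
    exact hinf ((s.finite_toSet.biUnion fun x _ => bad_finite x).subset hVsub)
  · rintro (hm | hfin)
    · classical
      rw [isCompact_iff_finite_subcover]
      intro ι U hU hcov
      obtain ⟨i0, hi0⟩ := Set.mem_iUnion.1 (hcov hm)
      have hcond := (ht (U i0)ᶜ).1 (hU i0).isClosed_compl
      have hfin' : ((U i0)ᶜ).Finite :=
        hcond.2.resolve_right fun h => h hi0
      have hSfin : (V \ U i0).Finite := hfin'.subset fun y hy => hy.2
      have hch : ∀ y : Pt, ∃ i, y ∈ V → y ∈ U i := by
        intro y
        by_cases hy : y ∈ V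
        · obtain ⟨i, hi⟩ := Set.mem_iUnion.1 (hcov hy)
          exact ⟨i, fun _ => hi⟩
        · exact ⟨i0, fun h => absurd h hy⟩
      choose f hf using hch
      refine ⟨insert i0 (hSfin.toFinset.image f), ?_⟩
      intro y hy
      by_cases hyU : y ∈ U i0
      · exact Set.mem_iUnion₂.2 ⟨i0, Finset.mem_insert_self _ _, hyU⟩
      · refine Set.mem_iUnion₂.2 ⟨f y, ?_, hf y hy⟩
        exact Finset.mem_insert_of_mem (Finset.mem_image.2
          ⟨y, hSfin.mem_toFinset.2 ⟨hy, hyU⟩, rfl⟩)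
    · exact hfin.isCompact
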